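/- Suppose there exists u ∈ U such that for every v ∈ V there is a coordinate c with u[c] = v[c] = w[c] = 1. Then in the radius-construction graph G_rad, the identified vertex u^0 has eccentricity at most 4a+1; that is, for every vertex z of G_rad there is a walk between u^0 and z of length at most 4a+1. In particular the radius of G_rad is at most 4a+1. -/

import Mathlib

/-!
Radius lower-bound construction (Theorem 3.2, "hitting set" case): if some `u ∈ U`
satisfies that for every `v ∈ V` there is a coordinate `c` with
`u[c] = v[c] = w[c] = 1`, then in the radius-construction graph `G_rad` the
identified vertex `u^0` has eccentricity at most `4a+1`: every vertex is joined to
`u^0` by a walk of length at most `4a+1` (so the radius of `G_rad` is at most `4a+1`).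
-/

namespace RadConstr

variable {B P : Type*}

/-- Vertices of a graph assembled from base vertices `B` and, for each path request
`p : P` of length `L p`, the `L p - 1` internal vertices of the path. -/
abbrev Vert (B P : Type*) (L : P → ℕ) : Type _ := B ⊕ (Σ p : P, Fin (L p - 1))

/-- `pos e0 e1 L p i z` : `z` is the `i`-th vertex along the path `p`
(whose endpoints are `e0 p` and `e1 p` and whose length is `L p`). -/
def pos (e0 e1 : P → B) (L : P → ℕ) (p : P) (i : ℕ) (z : Vert B P L) : Prop :=
  (i = 0 ∧ z = Sum.inl (e0 p)) ∨ (i = L p ∧ z = Sum.inl (e1 p)) ∨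
    (∃ h : i - 1 < L p - 1, 0 < i ∧ i < L p ∧ z = Sum.inr ⟨p, ⟨i - 1, h⟩⟩)

/-- The graph obtained from the base vertex set `B` by adding, for each `p : P`, an
internally vertex-disjoint path of length `L p` between the vertices `e0 p` and
`e1 p` (for `L p = 1` this is just an edge). -/
def pathGraph (e0 e1 : P → B) (L : P → ℕ) : SimpleGraph (Vert B P L) where
  Adj x y := x ≠ y ∧ ∃ p i, i < L p ∧
    ((pos e0 e1 L p i x ∧ pos e0 e1 L p (i + 1) y) ∨
     (pos e0 e1 L p i y ∧ pos e0 e1 L p (i + 1) x))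
  symm := ⟨by
    rintro x y ⟨hne, p, i, hi, h⟩
    exact ⟨hne.symm, p, i, hi, h.symm⟩⟩
  loopless := ⟨fun x h => h.1 rfl⟩

/-- Base (named) vertices of the radius-construction graph `G_rad`: two copies
(`side = false` is the left copy, `side = true` the right copy) of the base vertices
of `G(U,V,w,a)`, with the vertices `u^0` of the two copies identified. -/
inductive Base (ℓ : ℕ) (U V : Set (Fin ℓ → Bool)) : Type
  | cU (side : Bool) (c : Fin ℓ)
  | cV (side : Bool) (c : Fin ℓ)
  | u0 (u : U)                       -- shared between the two copies
  | ua (side : Bool) (u : U)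
  | v0 (side : Bool) (v : V)
  | va (side : Bool) (v : V)
  | x (side : Bool)
  | y (side : Bool)

/-- Path requests of the radius-construction graph `G_rad` (each request of
`G(U,V,w,a)` appears once per side). -/
inductive Pth (ℓ : ℕ) (U V : Set (Fin ℓ → Bool)) (w : Fin ℓ → Bool) : Type
  | upath (side : Bool) (u : U)                                 -- u^0 … u^a, length a
  | vpath (side : Bool) (v : V)                                 -- v^0 … v^a, length a
  | uc (side : Bool) (u : U) (c : Fin ℓ) (h : u.1 c = true)     -- u^a — c_U, length a
  | vc (side : Bool) (v : V) (c : Fin ℓ) (h : v.1 c = true)     -- c_V — v^0, length a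
  | wc (side : Bool) (c : Fin ℓ) (h : w c = true)               -- edge c_U — c_V
  | xu (side : Bool) (u : U)                                    -- x — u^a, length a
  | yv (side : Bool) (v : V)                                    -- y — v^0, length a

variable {ℓ : ℕ} {U V : Set (Fin ℓ → Bool)} {w : Fin ℓ → Bool}

/-- First endpoint of each path request. -/
def e0 : Pth ℓ U V w → Base ℓ U V
  | .upath _ u => .u0 u
  | .vpath s v => .v0 s v
  | .uc s u _ _ => .ua s u
  | .vc s _ c _ => .cV s c
  | .wc s c _ => .cU s c
  | .xu s _ => .x s
  | .yv s _ => .y s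

/-- Second endpoint of each path request. -/
def e1 : Pth ℓ U V w → Base ℓ U V
  | .upath s u => .ua s u
  | .vpath s v => .va s v
  | .uc s _ c _ => .cU s c
  | .vc s v _ _ => .v0 s v
  | .wc s c _ => .cV s c
  | .xu s u => .ua s u
  | .yv s v => .v0 s v

/-- Length of each path request: the `c_U — c_V` connections are single edges,
all other paths have length `a`. -/
def len (a : ℕ) : Pth ℓ U V w → ℕ
  | .wc _ _ _ => 1
  | _ => a

/-- The radius-construction graph `G_rad`: two copies of `G(U,V,w,a)` with the
vertices `u^0` identified. -/
def Grad (a ℓ : ℕ) (U V : Set (Fin ℓ → Bool)) (w : Fin ℓ → Bool) :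
    SimpleGraph (Vert (Base ℓ U V) (Pth ℓ U V w) (len a)) :=
  pathGraph e0 e1 (len a)

end RadConstr

namespace RadConstr

section General

variable {B P : Type*} {e0 e1 : P → B} {L : P → ℕ}

theorem pos_exists (p : P) {i : ℕ} (hL : 1 ≤ L p) (hi : i ≤ L p) :
    ∃ z, pos e0 e1 L p i z := by
  rcases Nat.eq_zero_or_pos i with h | h
  · exact ⟨Sum.inl (e0 p), Or.inl ⟨h, rfl⟩⟩
  rcases eq_or_lt_of_le hi with h2 | h2
  · exact ⟨Sum.inl (e1 p), Or.inr (Or.inl ⟨h2, rfl⟩)⟩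
  · have hh : i - 1 < L p - 1 := by omega
    exact ⟨Sum.inr ⟨p, ⟨i - 1, hh⟩⟩, Or.inr (Or.inr ⟨hh, h, h2, rfl⟩)⟩

theorem pos_adj {p : P} (hne : e0 p ≠ e1 p) {i : ℕ} {z z' : Vert B P L}
    (hi : i + 1 ≤ L p) (h : pos e0 e1 L p i z) (h' : pos e0 e1 L p (i + 1) z') :
    (pathGraph e0 e1 L).Adj z z' := by
  show z ≠ z' ∧ ∃ p i, i < L p ∧ ((pos e0 e1 L p i z ∧ pos e0 e1 L p (i + 1) z') ∨
    (pos e0 e1 L p i z' ∧ pos e0 e1 L p (i + 1) z))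
  refine ⟨?_, p, i, hi, Or.inl ⟨h, h'⟩⟩
  rcases h with ⟨hi0, rfl⟩ | ⟨hiL, rfl⟩ | ⟨hh, hpos, hlt, rfl⟩ <;>
    rcases h' with ⟨hi0', rfl⟩ | ⟨hiL', rfl⟩ | ⟨hh', hpos', hlt', rfl⟩ <;>
      simp_all <;> first
        | omega
        | (intro hcontra; exact hne (by simpa using hcontra))
        | (intro hcontra; omega)

theorem walk_from_e0 {p : P} (hne : e0 p ≠ e1 p) (hL : 1 ≤ L p) :
    ∀ i, i ≤ L p → ∀ z, pos e0 e1 L p i z →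
      ∃ q : (pathGraph e0 e1 L).Walk (Sum.inl (e0 p)) z, q.length = i := by
  intro i
  induction i with
  | zero =>
    intro _ z hz
    rcases hz with ⟨_, rfl⟩ | ⟨h0, _⟩ | ⟨_, h0, _⟩
    · exact ⟨.nil, rfl⟩
    · omega
    · omega
  | succ i ih =>
    intro hi z hz
    obtain ⟨z', hz'⟩ := pos_exists p hL (by omega : i ≤ L p)
    obtain ⟨q, hq⟩ := ih (by omega) z' hz'
    exact ⟨q.concat (pos_adj hne hi hz' hz),
      by rw [SimpleGraph.Walk.length_concat, hq]⟩

theorem walk_to_e1 {p : P} (hne : e0 p ≠ e1 p) (hL : 1 ≤ L p) :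
    ∀ k, k ≤ L p → ∀ z, pos e0 e1 L p (L p - k) z →
      ∃ q : (pathGraph e0 e1 L).Walk z (Sum.inl (e1 p)), q.length = k := by
  intro k
  induction k with
  | zero =>
    intro _ z hz
    rcases hz with ⟨h0, _⟩ | ⟨_, rfl⟩ | ⟨_, _, h0, _⟩
    · omega
    · exact ⟨.nil, rfl⟩
    · omega
  | succ k ih =>
    intro hk z hz
    obtain ⟨z', hz'⟩ := pos_exists p hL (by omega : L p - k ≤ L p)
    have heq : L p - (k + 1) + 1 = L p - k := by omega
    obtain ⟨q, hq⟩ := ih (by omega) z' hz'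
    refine ⟨SimpleGraph.Walk.cons (pos_adj hne (by omega) hz (heq ▸ hz')) q, ?_⟩
    rw [SimpleGraph.Walk.length_cons, hq]

end General

section Concrete

variable {ℓ : ℕ} {U V : Set (Fin ℓ → Bool)} {w : Fin ℓ → Bool}

theorem e0_ne_e1 (p : Pth ℓ U V w) : e0 p ≠ e1 p := by
  cases p <;> simp [e0, e1]

theorem len_pos {a : ℕ} (ha : 0 < a) (p : Pth ℓ U V w) : 1 ≤ len a p := by
  cases p <;> simp [len] <;> omega

theorem len_le_a {a : ℕ} (ha : 0 < a) (p : Pth ℓ U V w) : len a p ≤ a := by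
  cases p <;> simp [len] <;> omega

/-- `DD b z n` : there is a walk of length at most `n` from base vertex `b` to `z`. -/
def DD (a : ℕ) {ℓ : ℕ} {U V : Set (Fin ℓ → Bool)} {w : Fin ℓ → Bool}
    (b : Base ℓ U V) (z : Vert (Base ℓ U V) (Pth ℓ U V w) (len a)) (n : ℕ) : Prop :=
  ∃ q : (Grad a ℓ U V w).Walk (Sum.inl b) z, q.length ≤ n

theorem DD_mono {a n m : ℕ} {b : Base ℓ U V}
    {z : Vert (Base ℓ U V) (Pth ℓ U V w) (len a)}
    (h : DD a b z n) (hnm : n ≤ m) : DD a b z m := by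
  obtain ⟨q, hq⟩ := h
  exact ⟨q, hq.trans hnm⟩

theorem DD_step0 {a n : ℕ} (ha : 0 < a) {b : Base ℓ U V} (p : Pth ℓ U V w)
    (h : DD (w := w) a b (Sum.inl (e0 p)) n) : DD (w := w) a b (Sum.inl (e1 p)) (n + len a p) := by
  unfold DD Grad at *
  obtain ⟨q, hq⟩ := h
  obtain ⟨q2, hq2⟩ := walk_from_e0 (e0_ne_e1 p) (len_pos ha p) (len a p) le_rfl
    (Sum.inl (e1 p)) (Or.inr (Or.inl ⟨rfl, rfl⟩))
  exact ⟨q.append q2, by rw [SimpleGraph.Walk.length_append, hq2]; omega⟩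

theorem DD_step1 {a n : ℕ} (ha : 0 < a) {b : Base ℓ U V} (p : Pth ℓ U V w)
    (h : DD (w := w) a b (Sum.inl (e1 p)) n) : DD (w := w) a b (Sum.inl (e0 p)) (n + len a p) := by
  unfold DD Grad at *
  obtain ⟨q, hq⟩ := h
  obtain ⟨q2, hq2⟩ := walk_from_e0 (e0_ne_e1 p) (len_pos ha p) (len a p) le_rfl
    (Sum.inl (e1 p)) (Or.inr (Or.inl ⟨rfl, rfl⟩))
  exact ⟨q.append q2.reverse,
    by rw [SimpleGraph.Walk.length_append, SimpleGraph.Walk.length_reverse, hq2]; omega⟩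

theorem pos_internal {a : ℕ} (p : Pth ℓ U V w) (j : Fin (len a p - 1)) :
    pos e0 e1 (len a) p (j.val + 1)
      (Sum.inr ⟨p, j⟩ : Vert (Base ℓ U V) (Pth ℓ U V w) (len a)) := by
  have hj := j.isLt
  exact Or.inr (Or.inr ⟨by omega, by omega, by omega, by simp⟩)

theorem DD_int0 {a n : ℕ} (ha : 0 < a) {b : Base ℓ U V} (p : Pth ℓ U V w)
    (j : Fin (len a p - 1)) (h : DD (w := w) a b (Sum.inl (e0 p)) n) :
    DD (w := w) a b (Sum.inr ⟨p, j⟩) (n + a) := by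
  unfold DD Grad at *
  obtain ⟨q, hq⟩ := h
  have hj := j.isLt
  have hla := len_le_a ha p
  obtain ⟨q2, hq2⟩ := walk_from_e0 (e0_ne_e1 p) (len_pos ha p) (j.val + 1)
    (by omega) (Sum.inr ⟨p, j⟩) (pos_internal p j)
  exact ⟨q.append q2, by rw [SimpleGraph.Walk.length_append, hq2]; omega⟩

theorem DD_int1 {a n : ℕ} (ha : 0 < a) {b : Base ℓ U V} (p : Pth ℓ U V w)
    (j : Fin (len a p - 1)) (h : DD (w := w) a b (Sum.inl (e1 p)) n) :
    DD (w := w) a b (Sum.inr ⟨p, j⟩) (n + a) := by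
  unfold DD Grad at *
  obtain ⟨q, hq⟩ := h
  have hj := j.isLt
  have hla := len_le_a ha p
  have heq : len a p - (len a p - (j.val + 1)) = j.val + 1 := by omega
  obtain ⟨q2, hq2⟩ := walk_to_e1 (e0_ne_e1 p) (len_pos ha p) (len a p - (j.val + 1))
    (by omega) (Sum.inr ⟨p, j⟩) (by rw [heq]; exact pos_internal p j)
  exact ⟨q.append q2.reverse,
    by rw [SimpleGraph.Walk.length_append, SimpleGraph.Walk.length_reverse, hq2]; omega⟩

end Concrete

end RadConstr
open RadConstr in
theorem radius_construction_yes_case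
    (a ℓ : ℕ) (ha : 0 < a) (hℓ : 0 < ℓ)
    (U V : Set (Fin ℓ → Bool)) (hUfin : U.Finite) (hVfin : V.Finite)
    (hU : U.Nonempty) (hV : V.Nonempty) (w : Fin ℓ → Bool)
    (hUone : ∀ u ∈ U, ∃ c, u c = true) (hVone : ∀ v ∈ V, ∃ c, v c = true)
    (hUcov : ∀ c : Fin ℓ, ∃ u ∈ U, u c = true)
    (hVcov : ∀ c : Fin ℓ, ∃ v ∈ V, v c = true)
    (u : Fin ℓ → Bool) (hu : u ∈ U)
    (hhit : ∀ v ∈ V, ∃ c, u c = true ∧ v c = true ∧ w c = true) :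
    ∀ z : Vert (Base ℓ U V) (Pth ℓ U V w) (len a),
      ∃ p : (Grad a ℓ U V w).Walk (Sum.inl (Base.u0 ⟨u, hu⟩)) z, p.length ≤ 4 * a + 1 := by
  intro z
  set u₀ : U := ⟨u, hu⟩ with hu₀
  show DD (V := V) (w := w) a (Base.u0 u₀) z (4 * a + 1)
  have h0 : DD (V := V) (w := w) a (Base.u0 u₀) (Sum.inl (Base.u0 u₀)) 0 := ⟨.nil, by simp⟩
  -- u^a of the special u, on each side
  have hDua0 : ∀ s, DD (V := V) (w := w) a (Base.u0 u₀) (Sum.inl (Base.ua s u₀)) a := fun s =>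
    DD_mono (DD_step0 ha (.upath s u₀) h0) (by simp [len])
  -- x on each side
  have hDx : ∀ s, DD (V := V) (w := w) a (Base.u0 u₀) (Sum.inl (Base.x s)) (2 * a) := fun s =>
    DD_mono (DD_step1 ha (.xu s u₀) (hDua0 s)) (by simp [len]; omega)
  -- u'^a for every u', on each side
  have hDua : ∀ s u', DD (V := V) (w := w) a (Base.u0 u₀) (Sum.inl (Base.ua s u')) (3 * a) :=
    fun s u' => DD_mono (DD_step0 ha (.xu s u') (hDx s)) (by simp [len]; omega)
  -- v^0 for every v, on each side
  have hDv0 : ∀ s (v' : V), DD (V := V) (w := w) a (Base.u0 u₀) (Sum.inl (Base.v0 s v')) (3 * a + 1) := by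
    intro s v'
    obtain ⟨c, huc, hvc, hwc⟩ := hhit v'.1 v'.2
    have h1 : DD (V := V) (w := w) a (Base.u0 u₀) (Sum.inl (Base.cU s c)) (2 * a) :=
      DD_mono (DD_step0 ha (.uc s u₀ c huc) (hDua0 s)) (by simp [len]; omega)
    have h2 : DD (V := V) (w := w) a (Base.u0 u₀) (Sum.inl (Base.cV s c)) (2 * a + 1) :=
      DD_mono (DD_step0 ha (.wc s c hwc) h1) (by simp [len])
    exact DD_mono (DD_step0 ha (.vc s v' c hvc) h2) (by simp [len]; omega)
  obtain b | ⟨p, j⟩ := z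
  · cases b with
    | cU s c =>
      obtain ⟨u', hu', hc⟩ := hUcov c
      exact DD_mono (DD_step0 ha (.uc s ⟨u', hu'⟩ c hc) (hDua s ⟨u', hu'⟩))
        (by simp [len]; omega)
    | cV s c =>
      obtain ⟨v', hv', hc⟩ := hVcov c
      exact DD_mono (DD_step1 ha (.vc s ⟨v', hv'⟩ c hc) (hDv0 s ⟨v', hv'⟩))
        (by simp [len]; omega)
    | u0 u' =>
      exact DD_mono (DD_step1 ha (.upath false u') (hDua false u')) (by simp [len]; omega)
    | ua s u' => exact DD_mono (hDua s u') (by omega)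
    | v0 s v' => exact DD_mono (hDv0 s v') (by omega)
    | va s v' =>
      exact DD_mono (DD_step0 ha (.vpath s v') (hDv0 s v')) (by simp [len]; omega)
    | x s => exact DD_mono (hDx s) (by omega)
    | y s =>
      obtain ⟨v', hv'⟩ := hV
      exact DD_mono (DD_step1 ha (.yv s ⟨v', hv'⟩) (hDv0 s ⟨v', hv'⟩)) (by simp [len]; omega)
  · cases p with
    | upath s u' => exact DD_mono (DD_int1 ha _ j (hDua s u')) (by omega)
    | vpath s v' => exact DD_mono (DD_int0 ha _ j (hDv0 s v')) (by omega)
    | uc s u' c h => exact DD_mono (DD_int0 ha _ j (hDua s u')) (by omega)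
    | vc s v' c h => exact DD_mono (DD_int1 ha _ j (hDv0 s v')) (by omega)
    | wc s c h => exact absurd j.isLt (by simp [len])
    | xu s u' => exact DD_mono (DD_int0 ha _ j (hDx s)) (by omega)
    | yv s v' => exact DD_mono (DD_int1 ha _ j (hDv0 s v')) (by omega)
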